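/- Let h_1,…,h_n : ℝ^d → ℝ, let w_0 ∈ ℝ^d, r > 0, and Ω = B(w_0, r) = {w : ‖w − w_0‖ ≤ r}. Let S ⊆ {1,…,n} be nonempty with complement S^c = {1,…,n} \ S. Assume: (i) for each i ∈ S^c there is L_i > 0 with |h_i(w') − h_i(w_0)| ≤ L_i‖w' − w_0‖ for all w' ∈ Ω (local Lipschitz continuity at w_0); (ii) h_S = ∑_{i∈S} h_i attains a minimum over Ω at some w_S* ∈ Ω with w_S* ≠ w_0, and h_S(w_0) − h_S(w_S*) ≥ (μ|S|/2)‖w_0 − w_S*‖² for some μ > 0 (local one-point strong convexity at w_0). If ζ := 2·(∑_{i∈S^c} L_i) / (μ·|S|·‖w_0 − w_S*‖) < 1, then h_{S^c} = ∑_{i∈S^c} h_i is ζ-insignificant at w_0 with respect to (h_S, Ω), i.e. |h_{S^c}(w_S*) − h_{S^c}(w_0)| ≤ ζ·(h_S(w_0) − h_S(w_S*)). -/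

import Mathlib

/-- Theorem 4 (first part): under local Lipschitz continuity of the discarded losses and
local one-point strong convexity of `h_S` at `w₀`, if
`ζ = 2(∑_{i∈Sᶜ} L_i)/(μ|S|‖w₀ − w_S*‖) < 1` then `h_{Sᶜ}` is `ζ`-insignificant at `w₀`
w.r.t. `(h_S, B(w₀, r))`. -/
theorem stmt7 (d n : ℕ) (h : Fin n → EuclideanSpace ℝ (Fin d) → ℝ)
    (w₀ : EuclideanSpace ℝ (Fin d)) (r : ℝ) (hr : 0 < r)
    (S : Finset (Fin n)) (hS : S.Nonempty)
    (L : Fin n → ℝ) (hLpos : ∀ i ∈ Sᶜ, 0 < L i)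
    (hlip : ∀ i ∈ Sᶜ, ∀ w' ∈ Metric.closedBall w₀ r,
      |h i w' - h i w₀| ≤ L i * ‖w' - w₀‖)
    (μ : ℝ) (hμ : 0 < μ)
    (wS : EuclideanSpace ℝ (Fin d)) (hwS : wS ∈ Metric.closedBall w₀ r) (hwS0 : wS ≠ w₀)
    (hmin : ∀ w' ∈ Metric.closedBall w₀ r, ∑ i ∈ S, h i wS ≤ ∑ i ∈ S, h i w')
    (hopsc : ∑ i ∈ S, h i w₀ - ∑ i ∈ S, h i wS ≥ μ * S.card / 2 * ‖w₀ - wS‖ ^ 2)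
    (ζ : ℝ) (hζdef : ζ = 2 * (∑ i ∈ Sᶜ, L i) / (μ * S.card * ‖w₀ - wS‖))
    (hζ : ζ < 1) :
    |∑ i ∈ Sᶜ, h i wS - ∑ i ∈ Sᶜ, h i w₀| ≤
      ζ * (∑ i ∈ S, h i w₀ - ∑ i ∈ S, h i wS) := by
  have hnorm : 0 < ‖w₀ - wS‖ := by
    simpa [norm_sub_pos_iff] using (sub_ne_zero.mpr (Ne.symm hwS0))
  have hcard : (0:ℝ) < S.card := by exact_mod_cast Finset.card_pos.mpr hS
  have hLsum : 0 ≤ ∑ i ∈ Sᶜ, L i := Finset.sum_nonneg fun i hi => (hLpos i hi).le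
  have key : |∑ i ∈ Sᶜ, h i wS - ∑ i ∈ Sᶜ, h i w₀| ≤ (∑ i ∈ Sᶜ, L i) * ‖w₀ - wS‖ := by
    have h1 : ∑ i ∈ Sᶜ, h i wS - ∑ i ∈ Sᶜ, h i w₀ = ∑ i ∈ Sᶜ, (h i wS - h i w₀) := by
      rw [Finset.sum_sub_distrib]
    rw [h1]
    calc |∑ i ∈ Sᶜ, (h i wS - h i w₀)| ≤ ∑ i ∈ Sᶜ, |h i wS - h i w₀| :=
          Finset.abs_sum_le_sum_abs _ _
      _ ≤ ∑ i ∈ Sᶜ, L i * ‖wS - w₀‖ :=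
          Finset.sum_le_sum fun i hi => hlip i hi wS hwS
      _ = (∑ i ∈ Sᶜ, L i) * ‖w₀ - wS‖ := by
          rw [← Finset.sum_mul, norm_sub_rev]
  have hden : μ * S.card * ‖w₀ - wS‖ ≠ 0 := by positivity
  have hzeta : ζ * (μ * S.card / 2 * ‖w₀ - wS‖ ^ 2) = (∑ i ∈ Sᶜ, L i) * ‖w₀ - wS‖ := by
    rw [hζdef]
    field_simp
  have hζ0 : 0 ≤ ζ := by
    rw [hζdef]; positivity
  calc |∑ i ∈ Sᶜ, h i wS - ∑ i ∈ Sᶜ, h i w₀| ≤ (∑ i ∈ Sᶜ, L i) * ‖w₀ - wS‖ := key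
    _ = ζ * (μ * S.card / 2 * ‖w₀ - wS‖ ^ 2) := hzeta.symm
    _ ≤ ζ * (∑ i ∈ S, h i w₀ - ∑ i ∈ S, h i wS) := mul_le_mul_of_nonneg_left hopsc hζ0
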